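/- Let A be a finite-dimensional self-adjoint (with respect to a positive weight π) linear operator on functions on a finite set, with eigenvalues μ₁ = 1 > μ₂ ≥ ... and with the property that A maps increasing functions to increasing functions and A·1 = 1. If A has a strictly increasing eigenfunction f with eigenvalue μ, and A also has an increasing eigenfunction g with eigenvalue μ₂ (g nonconstant), and π satisfies FKG, then μ = μ₂. -/
import Mathlib


/-- Configurations of the Ising model on `n` sites: spins taking values in
`{-1, +1} ⊆ ℝ`, with the coordinatewise partial order. -/
abbrev Spins (n : ℕ) : Type := Fin n → ({-1, 1} : Finset ℝ)

theorem stmt_16 (n : ℕ) (π : Spins n → ℝ)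
    -- π is a fully supported probability measure
    (hπ0 : ∀ σ, 0 < π σ) (hπ1 : ∑ σ : Spins n, π σ = 1)
    -- π satisfies the FKG inequality
    (hFKG : ∀ f g : Spins n → ℝ, Monotone f → Monotone g →
      (∑ σ, π σ * f σ) * (∑ σ, π σ * g σ) ≤ ∑ σ, π σ * (f σ * g σ))
    -- A is a linear operator on functions on the (finite) state space
    (A : (Spins n → ℝ) →ₗ[ℝ] (Spins n → ℝ))
    -- A is self-adjoint with respect to the weight π
    (hSA : ∀ u v : Spins n → ℝ,
      ∑ σ, π σ * (u σ * A v σ) = ∑ σ, π σ * (A u σ * v σ))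
    -- A maps increasing functions to increasing functions
    (hmono : ∀ u : Spins n → ℝ, Monotone u → Monotone (A u))
    -- A·1 = 1
    (hA1 : A (fun _ => 1) = fun _ => 1)
    -- the eigenvalue μ₁ = 1 is simple: its eigenfunctions are the constants
    (hsimple : ∀ u : Spins n → ℝ, A u = u → ∃ c : ℝ, u = fun _ => c)
    -- all eigenvalues other than μ₁ = 1 are at most μ₂ < 1
    (μ μ₂ : ℝ) (hμ₂lt : μ₂ < 1)
    (hsecond : ∀ (ν : ℝ) (u : Spins n → ℝ), u ≠ 0 → A u = ν • u → ν ≠ 1 → ν ≤ μ₂)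
    -- f is a strictly increasing eigenfunction of A with eigenvalue μ
    (f : Spins n → ℝ) (hf : StrictMono f) (hAf : A f = μ • f)
    -- g is a nonconstant increasing eigenfunction of A with eigenvalue μ₂
    (g : Spins n → ℝ) (hg : Monotone g) (hgnc : ¬∃ c : ℝ, g = fun _ => c)
    (hAg : A g = μ₂ • g) :
    μ = μ₂ := by
  classical
  by_contra hne
  -- Notation
  set S : ℝ := ∑ σ : Spins n, π σ * (f σ * g σ) with hSdef
  set T : ℝ := ∑ σ : Spins n, π σ * g σ with hTdef
  -- Step 1: g is orthogonal to the constant function 1, i.e. T = 0.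
  have hT0 : T = 0 := by
    have h := hSA g (fun _ => 1)
    rw [hA1, hAg] at h
    simp only [Pi.smul_apply, smul_eq_mul, mul_one] at h
    have h1 : T = μ₂ * T := by
      rw [hTdef, Finset.mul_sum, h]
      exact Finset.sum_congr rfl fun σ _ => by ring
    have h2 : (1 - μ₂) * T = 0 := by linarith
    rcases mul_eq_zero.mp h2 with h3 | h3
    · exact absurd h3 (by intro h4; linarith)
    · exact h3
  -- Step 2: f and g are orthogonal, i.e. S = 0.
  have hS0 : S = 0 := by
    have h := hSA f g
    rw [hAf, hAg] at h
    simp only [Pi.smul_apply, smul_eq_mul] at h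
    have hl : μ₂ * S = ∑ σ : Spins n, π σ * (f σ * (μ₂ * g σ)) := by
      rw [hSdef, Finset.mul_sum]
      exact Finset.sum_congr rfl fun σ _ => by ring
    have hr : μ * S = ∑ σ : Spins n, π σ * (μ * f σ * g σ) := by
      rw [hSdef, Finset.mul_sum]
      exact Finset.sum_congr rfl fun σ _ => by ring
    have h2 : μ₂ * S = μ * S := by rw [hl, hr, h]
    have h3 : (μ₂ - μ) * S = 0 := by linarith
    rcases mul_eq_zero.mp h3 with h4 | h4
    · exact absurd (by linarith : μ = μ₂) hne
    · exact h4
  -- Bottom and top configurations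
  let bot : Spins n := fun _ => ⟨-1, by simp⟩
  let top : Spins n := fun _ => ⟨1, by simp⟩
  have hval : ∀ (σ : Spins n) (i : Fin n), ((σ i : ℝ) = -1 ∨ (σ i : ℝ) = 1) := by
    intro σ i
    have h := (σ i).2
    rw [Finset.mem_insert, Finset.mem_singleton] at h
    exact h
  have hbotle : ∀ σ : Spins n, bot ≤ σ := by
    intro σ i
    have : (-1 : ℝ) ≤ (σ i : ℝ) := by rcases hval σ i with h | h <;> rw [h] <;> norm_num
    exact this
  have htople : ∀ σ : Spins n, σ ≤ top := by
    intro σ i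
    have : (σ i : ℝ) ≤ (1 : ℝ) := by rcases hval σ i with h | h <;> rw [h] <;> norm_num
    exact this
  -- g is nonconstant, so g bot < g top
  have hgbt : g bot < g top := by
    rcases lt_or_eq_of_le (hg (hbotle top)) with h | h
    · exact h
    · exfalso
      apply hgnc
      refine ⟨g bot, funext fun σ => le_antisymm ?_ ?_⟩
      · calc g σ ≤ g top := hg (htople σ)
          _ = g bot := h.symm
      · exact hg (hbotle σ)
  have hbtlt : bot < top :=
    lt_of_le_of_ne (hbotle top) (fun h => (ne_of_lt hgbt) (congrArg g h))
  -- The set of strictly comparable pairs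
  let P : Finset (Spins n × Spins n) := Finset.univ.filter (fun p => p.1 < p.2)
  have hbtmem : (bot, top) ∈ P := Finset.mem_filter.mpr ⟨Finset.mem_univ _, hbtlt⟩
  have hPne : P.Nonempty := ⟨(bot, top), hbtmem⟩
  set δ : ℝ := P.inf' hPne (fun p => f p.2 - f p.1) with hδdef
  set M : ℝ := P.sup' hPne (fun p => g p.2 - g p.1) with hMdef
  have hδpos : 0 < δ := by
    rw [hδdef, Finset.lt_inf'_iff]
    intro p hp
    have hlt : p.1 < p.2 := (Finset.mem_filter.mp hp).2
    have := hf hlt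
    linarith
  have hMpos : 0 < M := by
    have h1 : g top - g bot ≤ M := Finset.le_sup' (fun p => g p.2 - g p.1) hbtmem
    linarith
  set ε : ℝ := δ / M with hεdef
  have hεpos : 0 < ε := div_pos hδpos hMpos
  -- f - ε g is monotone
  have hhm : Monotone (fun σ => f σ - ε * g σ) := by
    intro σ τ hle
    rcases eq_or_lt_of_le hle with h | h
    · exact le_of_eq (by rw [h])
    · have hmem : (σ, τ) ∈ P := Finset.mem_filter.mpr ⟨Finset.mem_univ _, h⟩
      have h1 : δ ≤ f τ - f σ := Finset.inf'_le (fun p => f p.2 - f p.1) hmem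
      have h2 : g τ - g σ ≤ M := Finset.le_sup' (fun p => g p.2 - g p.1) hmem
      have h3 : ε * (g τ - g σ) ≤ ε * M :=
        mul_le_mul_of_nonneg_left h2 hεpos.le
      have h4 : ε * M = δ := div_mul_cancel₀ δ (ne_of_gt hMpos)
      simp only
      linarith
  -- FKG applied to f - ε g and g
  have hfkg := hFKG (fun σ => f σ - ε * g σ) g hhm hg
  have hlhs : (∑ σ : Spins n, π σ * (f σ - ε * g σ)) * T = 0 := by
    rw [hT0, mul_zero]
  rw [← hTdef] at hfkg
  rw [hlhs] at hfkg
  have hrhs : ∑ σ : Spins n, π σ * ((f σ - ε * g σ) * g σ)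
      = S - ε * ∑ σ : Spins n, π σ * (g σ * g σ) := by
    rw [hSdef, Finset.mul_sum, ← Finset.sum_sub_distrib]
    exact Finset.sum_congr rfl fun σ _ => by ring
  rw [hrhs] at hfkg
  -- ∑ π g² > 0 since g is nonzero somewhere
  have hQ : 0 < ∑ σ : Spins n, π σ * (g σ * g σ) := by
    obtain ⟨σ₀, hσ₀⟩ : ∃ σ₀ : Spins n, g σ₀ ≠ 0 := by
      by_cases h : g top = 0
      · exact ⟨bot, by rw [h] at hgbt; exact ne_of_lt hgbt⟩
      · exact ⟨top, h⟩
    apply Finset.sum_pos'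
    · intro σ _
      exact mul_nonneg (hπ0 σ).le (mul_self_nonneg _)
    · exact ⟨σ₀, Finset.mem_univ _, mul_pos (hπ0 σ₀) (mul_self_pos.mpr hσ₀)⟩
  nlinarith
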